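/- arXiv:cond-mat/0508089 — 3 statements merged into one kernel-verified Lean document; each statement's English description precedes it below -/
import Mathlib

section
/- Let $(\Omega,\rho)$ be a probability space, $f:\Omega\to\Omega$ a bijective measure-preserving transformation, $(P_i)_{i\in I}$ a countable measurable partition of $\Omega$ with $\rho(P_i)>0$ for every $i\in I$, and $\phi:I\to I$ a map such that $\rho((f^{-1}P_{\phi(i)})^c\cap P_i)=0$ for all $i$. Then for every $i\in I$ there exists $k\geq 1$ with $\phi^k(i)=i$; i.e., every $\phi$-orbit is a closed cycle. -/
open MeasureTheory

theorem stmt_2 {Ω : Type*} [MeasurableSpace Ω] (ρ : Measure Ω)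
    [IsProbabilityMeasure ρ]
    (f : Ω → Ω) (hbij : Function.Bijective f) (hf : MeasurePreserving f ρ ρ)
    {I : Type*} [Countable I] (P : I → Set Ω)
    (hmeas : ∀ i, MeasurableSet (P i))
    (hdisj : Pairwise (Function.onFun Disjoint P))
    (hcover : (⋃ i, P i) = Set.univ)
    (hpos : ∀ i, 0 < ρ (P i))
    (φ : I → I)
    (haut : ∀ i, ρ ((f ⁻¹' P (φ i))ᶜ ∩ P i) = 0) :
    ∀ i, ∃ k ≥ 1, φ^[k] i = i := by
  -- preimage measure
  have hpre : ∀ j, ρ (f ⁻¹' P j) = ρ (P j) := fun j =>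
    hf.measure_preimage (hmeas j).nullMeasurableSet
  -- monotonicity along φ
  have hA : ∀ j, ρ (P j) ≤ ρ (P (φ j)) := by
    intro j
    have hsub : P j ⊆ f ⁻¹' P (φ j) ∪ ((f ⁻¹' P (φ j))ᶜ ∩ P j) := by
      intro x hx
      by_cases h : x ∈ f ⁻¹' P (φ j)
      · exact Or.inl h
      · exact Or.inr ⟨h, hx⟩
    calc ρ (P j) ≤ ρ (f ⁻¹' P (φ j) ∪ ((f ⁻¹' P (φ j))ᶜ ∩ P j)) := measure_mono hsub
      _ ≤ ρ (f ⁻¹' P (φ j)) + ρ ((f ⁻¹' P (φ j))ᶜ ∩ P j) := measure_union_le _ _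
      _ = ρ (P (φ j)) := by rw [haut j, hpre, add_zero]
  have hAk : ∀ (m : ℕ) (j : I), ρ (P j) ≤ ρ (P (φ^[m] j)) := by
    intro m
    induction m with
    | zero => intro j; simp
    | succ m ih =>
      intro j
      rw [Function.iterate_succ_apply']
      exact (ih j).trans (hA _)
  -- collision lemma
  have hB : ∀ j j', j ≠ j' → φ j = φ j' → ρ (P j) + ρ (P j') ≤ ρ (P (φ j)) := by
    intro j j' hne heq
    have hsub : P j ∪ P j' ⊆
        f ⁻¹' P (φ j) ∪ (((f ⁻¹' P (φ j))ᶜ ∩ P j) ∪ ((f ⁻¹' P (φ j'))ᶜ ∩ P j')) := by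
      rw [heq]
      rintro x (hx | hx)
      · by_cases h : x ∈ f ⁻¹' P (φ j')
        · exact Or.inl h
        · exact Or.inr (Or.inl ⟨h, hx⟩)
      · by_cases h : x ∈ f ⁻¹' P (φ j')
        · exact Or.inl h
        · exact Or.inr (Or.inr ⟨h, hx⟩)
    calc ρ (P j) + ρ (P j')
        = ρ (P j ∪ P j') := (measure_union (hdisj hne) (hmeas j')).symm
      _ ≤ ρ (f ⁻¹' P (φ j)) +
          ρ (((f ⁻¹' P (φ j))ᶜ ∩ P j) ∪ ((f ⁻¹' P (φ j'))ᶜ ∩ P j')) :=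
        (measure_mono hsub).trans (measure_union_le _ _)
      _ ≤ ρ (f ⁻¹' P (φ j)) +
          (ρ ((f ⁻¹' P (φ j))ᶜ ∩ P j) + ρ ((f ⁻¹' P (φ j'))ᶜ ∩ P j')) :=
        add_le_add_right (measure_union_le _ _) _
      _ = ρ (P (φ j)) := by rw [haut j, haut j', hpre, add_zero, add_zero]
  intro i
  -- pigeonhole: orbit takes finitely many values
  have hfin : Set.Finite {j : I | ρ (P i) ≤ ρ (P j)} := by
    apply Measure.finite_const_le_meas_of_disjoint_iUnion ρ (hpos i) hmeas hdisj
    rw [hcover]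
    exact (measure_lt_top ρ _).ne
  have hmaps : ∀ k : ℕ, φ^[k] i ∈ {j : I | ρ (P i) ≤ ρ (P j)} := fun k => hAk k i
  obtain ⟨a, -, b, -, hab, heq⟩ :=
    Set.infinite_univ.exists_ne_map_eq_of_mapsTo
      (f := fun k : ℕ => φ^[k] i) (fun k _ => hmaps k) hfin
  -- wlog a < b
  obtain ⟨a, b, hlt, heq⟩ : ∃ a b : ℕ, a < b ∧ φ^[a] i = φ^[b] i := by
    rcases hab.lt_or_gt with h | h
    · exact ⟨a, b, h, heq⟩
    · exact ⟨b, a, h, heq.symm⟩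
  -- take minimal a
  have hQ : ∃ a, ∃ b, a < b ∧ φ^[a] i = φ^[b] i := ⟨a, b, hlt, heq⟩
  classical
  obtain ⟨b, hab, heq⟩ := Nat.find_spec hQ
  rcases Nat.eq_zero_or_pos (Nat.find hQ) with h0 | h0
  · rw [h0] at heq hab
    exact ⟨b, hab, heq.symm⟩
  · exfalso
    obtain ⟨a', ha'⟩ : ∃ a', Nat.find hQ = a' + 1 :=
      ⟨Nat.find hQ - 1, (Nat.succ_pred_eq_of_pos h0).symm⟩
    rw [ha'] at heq hab
    have hb1 : a' < b - 1 := by omega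
    set j := φ^[a'] i with hj
    set j' := φ^[b - 1] i with hj'
    have hφeq : φ j = φ j' := by
      have h1 : φ j = φ^[a' + 1] i := (Function.iterate_succ_apply' φ a' i).symm
      have h2 : φ j' = φ^[b] i := by
        rw [hj', ← Function.iterate_succ_apply' φ (b - 1) i]
        congr 1
        omega
      rw [h1, h2, heq]
    have hne : j ≠ j' := by
      intro h
      exact Nat.find_min hQ (m := a') (by omega) ⟨b - 1, hb1, h⟩
    -- j' is on the forward orbit of φ j
    have horb : φ^[b - 1 - (a' + 1)] (φ j) = j' := by
      have : φ j = φ^[a' + 1] i := (Function.iterate_succ_apply' φ a' i).symm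
      rw [this, ← Function.iterate_add_apply, hj']
      congr 1
      omega
    have hle : ρ (P (φ j)) ≤ ρ (P j') := by
      rw [← horb]; exact hAk _ _
    have : ρ (P j) + ρ (P j') ≤ ρ (P j') := (hB j j' hne hφeq).trans hle
    have hcontra : ρ (P j') < ρ (P j) + ρ (P j') := by
      rw [add_comm]
      exact ENNReal.lt_add_right (measure_lt_top ρ _).ne (hpos j).ne'
    exact absurd this hcontra.not_ge
end

section
/- Let $(\Omega,\rho)$ be a probability space, $f:\Omega\to\Omega$ a bijective measure-preserving transformation, $(P_i)_{i\in I}$ a countable measurable partition with $\rho(P_i)>0$ for all $i$, and $\phi:I\to I$ with $\rho((f^{-1}P_{\phi(i)})^c\cap P_i)=0$ for all $i$. Then $\rho(P_{\phi(i)})=\rho(P_i)$ for every $i\in I$; i.e., the entropy is strictly constant along the macroscopic evolution. -/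
open MeasureTheory

theorem stmt_3 {Ω : Type*} [MeasurableSpace Ω] (ρ : Measure Ω)
    [IsProbabilityMeasure ρ]
    (f : Ω → Ω) (hbij : Function.Bijective f) (hf : MeasurePreserving f ρ ρ)
    {I : Type*} [Countable I] (P : I → Set Ω)
    (hmeas : ∀ i, MeasurableSet (P i))
    (hdisj : Pairwise (Function.onFun Disjoint P))
    (hcover : (⋃ i, P i) = Set.univ)
    (hpos : ∀ i, 0 < ρ (P i))
    (φ : I → I)
    (haut : ∀ i, ρ ((f ⁻¹' P (φ i))ᶜ ∩ P i) = 0) :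
    ∀ i, ρ (P (φ i)) = ρ (P i) := by
  have hpre : ∀ j, ρ (f ⁻¹' P j) = ρ (P j) := fun j =>
    hf.measure_preimage (hmeas j).nullMeasurableSet
  have hsub : ∀ i, ρ (P i \ f ⁻¹' P (φ i)) = 0 := by
    intro i
    have : P i \ f ⁻¹' P (φ i) = (f ⁻¹' P (φ i))ᶜ ∩ P i := by
      rw [Set.diff_eq, Set.inter_comm]
    rw [this]; exact haut i
  have mono : ∀ i, ρ (P i) ≤ ρ (P (φ i)) := by
    intro i
    calc ρ (P i) ≤ ρ (f ⁻¹' P (φ i)) := measure_mono_ae (ae_le_set.mpr (hsub i))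
      _ = ρ (P (φ i)) := hpre _
  have mono_iter : ∀ n i, ρ (P i) ≤ ρ (P (φ^[n] i)) := by
    intro n
    induction n with
    | zero => intro i; simp
    | succ n ih =>
      intro i
      rw [Function.iterate_succ_apply]
      exact (mono i).trans (ih (φ i))
  have fact3 : ∀ i1 i2, i1 ≠ i2 → φ i1 = φ i2 →
      ρ (P i1) + ρ (P i2) ≤ ρ (P (φ i1)) := by
    intro i1 i2 hne he
    have hd : Disjoint (P i1) (P i2) := hdisj hne
    have hle : ρ (P i1 ∪ P i2) ≤ ρ (f ⁻¹' P (φ i1)) := by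
      refine measure_mono_ae (ae_le_set.mpr ?_)
      have h0 : ρ ((P i1 \ f ⁻¹' P (φ i1)) ∪ (P i2 \ f ⁻¹' P (φ i1))) = 0 := by
        refine measure_union_null (hsub i1) ?_
        rw [he]; exact hsub i2
      refine measure_mono_null ?_ h0
      rw [Set.union_diff_distrib]
    calc ρ (P i1) + ρ (P i2) = ρ (P i1 ∪ P i2) := (measure_union hd (hmeas i2)).symm
      _ ≤ ρ (f ⁻¹' P (φ i1)) := hle
      _ = ρ (P (φ i1)) := hpre _
  -- along a periodic orbit the measure is constant
  have cycleconst : ∀ j q k, φ^[q] j = j → k ≤ q → ρ (P (φ^[k] j)) = ρ (P j) := by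
    intro j q k hq hk
    refine le_antisymm ?_ (mono_iter k j)
    have h1 : φ^[q - k] (φ^[k] j) = j := by
      rw [← Function.iterate_add_apply, Nat.sub_add_cancel hk, hq]
    calc ρ (P (φ^[k] j)) ≤ ρ (P (φ^[q - k] (φ^[k] j))) := mono_iter _ _
      _ = ρ (P j) := by rw [h1]
  -- any preimage of a periodic point is periodic
  have predper : ∀ i' p, φ i' = p → (∃ q, 1 ≤ q ∧ φ^[q] p = p) →
      ∃ q, 1 ≤ q ∧ φ^[q] i' = i' := by
    rintro i' p hip ⟨q, hq1, hq⟩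
    have hpred : φ (φ^[q - 1] p) = p := by
      have h' : φ^[q - 1 + 1] p = φ (φ^[q - 1] p) := Function.iterate_succ_apply' φ (q - 1) p
      rw [← h', Nat.sub_add_cancel hq1, hq]
    by_cases hcase : i' = φ^[q - 1] p
    · refine ⟨q, hq1, ?_⟩
      have hcomm : φ^[q] (φ^[q - 1] p) = φ^[q - 1] (φ^[q] p) := by
        rw [← Function.iterate_add_apply, ← Function.iterate_add_apply, Nat.add_comm]
      rw [hcase, hcomm, hq]
    · exfalso
      have h3 := fact3 i' (φ^[q - 1] p) hcase (by rw [hip, hpred])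
      rw [hip] at h3
      have hconst : ρ (P (φ^[q - 1] p)) = ρ (P p) :=
        cycleconst p q (q - 1) hq (Nat.sub_le _ _)
      rw [hconst] at h3
      have hlt : ρ (P p) < ρ (P p) + ρ (P i') :=
        ENNReal.lt_add_right (measure_ne_top ρ _) (hpos i').ne'
      rw [add_comm] at h3
      exact absurd (lt_of_lt_of_le hlt h3) (lt_irrefl _)
  -- if some iterate is periodic then the point itself is periodic
  have perback : ∀ n i', (∃ q, 1 ≤ q ∧ φ^[q] (φ^[n] i') = φ^[n] i') →
      ∃ q, 1 ≤ q ∧ φ^[q] i' = i' := by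
    intro n
    induction n with
    | zero => intro i' h; simpa using h
    | succ n ih =>
      intro i' h
      rw [Function.iterate_succ_apply] at h
      exact predper i' (φ i') rfl (ih (φ i') h)
  intro i
  refine le_antisymm ?_ (mono i)
  by_contra h
  have hlt : ρ (P i) < ρ (P (φ i)) := not_le.mp h
  by_cases hinj : Function.Injective (fun n : ℕ => φ^[n] i)
  · -- infinitely many pairwise disjoint sets of measure ≥ ρ (P (φ i)) > 0
    have hginj : Function.Injective (fun n : ℕ => φ^[n + 1] i) := by
      intro a b hab
      have := hinj hab
      omega
    have hU : ρ (⋃ n : ℕ, P (φ^[n + 1] i)) = ∑' n : ℕ, ρ (P (φ^[n + 1] i)) := by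
      refine measure_iUnion ?_ (fun n => hmeas _)
      intro a b hne
      exact hdisj (fun he => hne (hginj he))
    have hlow : ∀ n : ℕ, ρ (P (φ i)) ≤ ρ (P (φ^[n + 1] i)) := by
      intro n
      rw [Function.iterate_succ_apply]
      exact mono_iter n (φ i)
    have htop : (⊤ : ENNReal) ≤ ∑' n : ℕ, ρ (P (φ^[n + 1] i)) := by
      calc (⊤ : ENNReal) = ∑' _ : ℕ, ρ (P (φ i)) :=
            (ENNReal.tsum_const_eq_top_of_ne_zero (hpos (φ i)).ne').symm
        _ ≤ _ := ENNReal.tsum_le_tsum hlow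
    have hfin : ρ (⋃ n : ℕ, P (φ^[n + 1] i)) ≤ 1 := prob_le_one
    rw [hU] at hfin
    exact absurd (htop.trans hfin) (by simp)
  · obtain ⟨a, b, hab, hne⟩ := Function.not_injective_iff.mp hinj
    have key : ∀ a b : ℕ, a < b → φ^[a] i = φ^[b] i → ∃ q, 1 ≤ q ∧ φ^[q] i = i := by
      intro a b hlt' heq
      refine perback a i ⟨b - a, by omega, ?_⟩
      rw [← Function.iterate_add_apply, Nat.sub_add_cancel hlt'.le, heq]
    have hper : ∃ q, 1 ≤ q ∧ φ^[q] i = i := by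
      rcases hne.lt_or_gt with h' | h'
      · exact key a b h' hab
      · exact key b a h' hab.symm
    obtain ⟨r, hr1, hri⟩ := hper
    have hstep : φ^[r - 1] (φ i) = i := by
      have h' : φ^[r - 1 + 1] i = φ^[r - 1] (φ i) := Function.iterate_succ_apply φ (r - 1) i
      rw [← h', Nat.sub_add_cancel hr1, hri]
    have : ρ (P (φ i)) ≤ ρ (P i) := by
      calc ρ (P (φ i)) ≤ ρ (P (φ^[r - 1] (φ i))) := mono_iter _ _
        _ = ρ (P i) := by rw [hstep]
    exact absurd hlt (not_lt.mpr this)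
end

section
/- Under the assumptions of exact autonomy (probability space, $\rho$-preserving bijection $f$, countable partition $(P_i)$ with $\rho(P_i)>0$, map $\phi$ with $\rho((f^{-1}P_{\phi(i)})^c\cap P_i)=0$), if $\phi^n(i)=\phi^m(i)$ for some $n<m$ then $\phi^{n-1}(i)=\phi^{m-1}(i)$ whenever $n\geq 1$; i.e., $\phi$ is injective on each orbit (backward uniqueness on recurrent orbits). -/
open MeasureTheory

theorem stmt_4 {Ω : Type*} [MeasurableSpace Ω] (ρ : Measure Ω)
    [IsProbabilityMeasure ρ]
    (f : Ω → Ω) (hbij : Function.Bijective f) (hf : MeasurePreserving f ρ ρ)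
    {I : Type*} [Countable I] (P : I → Set Ω)
    (hmeas : ∀ i, MeasurableSet (P i))
    (hdisj : Pairwise (Function.onFun Disjoint P))
    (hcover : (⋃ i, P i) = Set.univ)
    (hpos : ∀ i, 0 < ρ (P i))
    (φ : I → I)
    (haut : ∀ i, ρ ((f ⁻¹' P (φ i))ᶜ ∩ P i) = 0) :
    ∀ i (n m : ℕ), 1 ≤ n → n < m → φ^[n] i = φ^[m] i → φ^[n - 1] i = φ^[m - 1] i := by
  -- preimage measure equality
  have hpre : ∀ a : I, ρ (f ⁻¹' P a) = ρ (P a) := fun a =>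
    hf.measure_preimage (hmeas a).nullMeasurableSet
  -- monotonicity along the orbit
  have hmono : ∀ j : I, ρ (P j) ≤ ρ (P (φ j)) := by
    intro j
    calc ρ (P j) ≤ ρ (f ⁻¹' P (φ j) ∪ ((f ⁻¹' P (φ j))ᶜ ∩ P j)) := by
          apply measure_mono
          intro x hx
          by_cases h : x ∈ f ⁻¹' P (φ j)
          · exact Or.inl h
          · exact Or.inr ⟨h, hx⟩
      _ ≤ ρ (f ⁻¹' P (φ j)) + ρ ((f ⁻¹' P (φ j))ᶜ ∩ P j) := measure_union_le _ _
      _ = ρ (P (φ j)) := by rw [haut j, add_zero, hpre]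
  have hmono' : ∀ (t : ℕ) (a : I), ρ (P a) ≤ ρ (P (φ^[t] a)) := by
    intro t
    induction t with
    | zero => intro a; simp
    | succ t ih =>
      intro a
      rw [Function.iterate_succ_apply']
      exact (ih a).trans (hmono _)
  -- two distinct states mapping to the same state
  have htwo : ∀ j k : I, j ≠ k → φ j = φ k →
      ρ (P j) + ρ (P k) ≤ ρ (P (φ j)) := by
    intro j k hjk hφ
    calc ρ (P j) + ρ (P k) = ρ (P j ∪ P k) :=
          (measure_union (hdisj hjk) (hmeas k)).symm
      _ ≤ ρ (f ⁻¹' P (φ j) ∪ (((f ⁻¹' P (φ j))ᶜ ∩ P j) ∪ ((f ⁻¹' P (φ k))ᶜ ∩ P k))) := by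
          apply measure_mono
          intro x hx
          rcases hx with hx | hx
          · by_cases h : x ∈ f ⁻¹' P (φ j)
            · exact Or.inl h
            · exact Or.inr (Or.inl ⟨h, hx⟩)
          · by_cases h : x ∈ f ⁻¹' P (φ k)
            · rw [hφ]; exact Or.inl h
            · exact Or.inr (Or.inr ⟨h, hx⟩)
      _ ≤ ρ (f ⁻¹' P (φ j)) +
            (ρ ((f ⁻¹' P (φ j))ᶜ ∩ P j) + ρ ((f ⁻¹' P (φ k))ᶜ ∩ P k)) :=
          (measure_union_le _ _).trans (by gcongr; exact measure_union_le _ _)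
      _ = ρ (P (φ j)) := by rw [haut j, haut k, add_zero, add_zero, hpre]
  intro i n m hn hnm heq
  by_contra hne
  set j := φ^[n - 1] i with hjdef
  set k := φ^[m - 1] i with hkdef
  set a := φ^[n] i with hadef
  have hj : φ j = a := by
    rw [hjdef, hadef, ← Function.iterate_succ_apply' φ (n - 1) i]
    congr 1
    omega
  have hk : φ k = a := by
    rw [heq, hkdef, ← Function.iterate_succ_apply' φ (m - 1) i]
    congr 1
    omega
  have hka : k = φ^[m - 1 - n] a := by
    rw [hkdef, hadef, ← Function.iterate_add_apply]
    congr 1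
    omega
  have h1 : ρ (P j) + ρ (P k) ≤ ρ (P a) := by
    have := htwo j k hne (hj.trans hk.symm)
    rwa [hj] at this
  have h2 : ρ (P a) ≤ ρ (P k) := by rw [hka]; exact hmono' _ a
  have h3 : ρ (P a) < ρ (P j) + ρ (P a) := by
    rw [add_comm]
    exact ENNReal.lt_add_right (measure_ne_top ρ _) (hpos j).ne'
  have h4 : ρ (P j) + ρ (P a) ≤ ρ (P a) := le_trans (by gcongr) h1
  exact absurd (h3.trans_le h4) (lt_irrefl _)
end
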